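/- Let (a_k)_{k≥1} be a sequence of positive integers and define q_0 = 1, q_1 = a_1, q_{n+1} = a_{n+1}q_n + q_{n−1} for n ≥ 1. Define a real sequence (b_k)_{k≥1} by: b_k = a_k if a_k ≠ 1; and if a_k = 1, letting ℓ ≥ 1 be the unique integer such that a_{k−i} = 1 for all 0 ≤ i < ℓ and either k = ℓ or a_{k−ℓ} ≠ 1, set b_k = F_ℓ/F_{ℓ−1}. Then for all n ≥ 1, ∏_{k=1}^n b_k ≤ q_n ≤ ∏_{k=1}^n (a_k + 1). -/
import Mathlib

private def runLen (a : ℕ → ℕ) : ℕ → ℕ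
  | 0 => 0
  | (k+1) => if a (k+1) = 1 then runLen a k + 1 else 0

private lemma runLen_le (a : ℕ → ℕ) : ∀ k, runLen a k ≤ k
  | 0 => le_refl 0
  | (k+1) => by
    unfold runLen
    split
    · exact Nat.succ_le_succ (runLen_le a k)
    · exact Nat.zero_le _

private lemma runLen_ones (a : ℕ → ℕ) : ∀ k, ∀ i, i < runLen a k → a (k - i) = 1
  | 0 => by simp [runLen]
  | (k+1) => by
    intro i hi
    unfold runLen at hi
    split at hi
    · rename_i h
      cases i with
      | zero => simpa using h
      | succ j =>
        have hkj : k + 1 - (j+1) = k - j := by omega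
        rw [hkj]
        exact runLen_ones a k j (by omega)
    · omega

private lemma runLen_end (a : ℕ → ℕ) : ∀ k, k = runLen a k ∨ a (k - runLen a k) ≠ 1
  | 0 => Or.inl rfl
  | (k+1) => by
    unfold runLen
    split
    · rcases runLen_end a k with h | h
      · left; omega
      · right
        have hk : k + 1 - (runLen a k + 1) = k - runLen a k := by omega
        rw [hk]; exact h
    · rename_i h
      right; simpa using h

set_option maxHeartbeats 1600000 in
/-- Lemma 3.5: with the modified coefficients `b_k` (equal to `a_k` when `a_k ≠ 1`, and to
`F_ℓ/F_{ℓ-1}` at the end of a run of `ℓ` consecutive ones), the continued fraction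
denominators satisfy `∏_{k=1}^n b_k ≤ q_n ≤ ∏_{k=1}^n (a_k + 1)`. -/
theorem qn_product_bounds (a q F : ℕ → ℕ) (b : ℕ → ℝ) (ha : ∀ k, 1 ≤ k → 1 ≤ a k)
    (hq0 : q 0 = 1) (hq1 : q 1 = a 1)
    (hq : ∀ n, 1 ≤ n → q (n + 1) = a (n + 1) * q n + q (n - 1))
    (hF0 : F 0 = 1) (hF1 : F 1 = 1) (hF : ∀ j, F (j + 2) = F (j + 1) + F j)
    (hb1 : ∀ k, 1 ≤ k → a k ≠ 1 → b k = a k)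
    (hb2 : ∀ k ℓ, 1 ≤ k → 1 ≤ ℓ → ℓ ≤ k → (∀ i, i < ℓ → a (k - i) = 1) →
      (k = ℓ ∨ a (k - ℓ) ≠ 1) → b k = (F ℓ : ℝ) / (F (ℓ - 1) : ℝ))
    (n : ℕ) (hn : 1 ≤ n) :
    (∏ k ∈ Finset.Icc 1 n, b k) ≤ (q n : ℝ) ∧
      (q n : ℝ) ≤ ∏ k ∈ Finset.Icc 1 n, ((a k : ℝ) + 1) := by
  -- Fibonacci positivity
  have hFpos : ∀ j, 1 ≤ F j := by
    have h2 : ∀ j, 1 ≤ F j ∧ 1 ≤ F (j+1) := by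
      intro j
      induction j with
      | zero => exact ⟨hF0.ge, hF1.ge⟩
      | succ j ih =>
        refine ⟨ih.2, ?_⟩
        rw [show j+1+1 = j+2 from rfl, hF j]
        omega
    exact fun j => (h2 j).1
  -- q is monotone and positive
  have hqmono : ∀ m, 1 ≤ m → q (m-1) ≤ q m ∧ 1 ≤ q m := by
    intro m hm
    induction m, hm using Nat.le_induction with
    | base =>
      have := ha 1 le_rfl
      constructor <;> simp [hq0, hq1] <;> omega
    | succ m hm ih =>
      have hqm := hq m hm
      have ham := ha (m+1) (by omega)
      have hms : m + 1 - 1 = m := by omega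
      rw [hms, hqm]
      constructor <;> nlinarith [ih.1, ih.2]
  -- value of b at a run of ones
  have hbval : ∀ k, 1 ≤ k → a k = 1 →
      b k = (F (runLen a k) : ℝ) / (F (runLen a k - 1) : ℝ) := by
    intro k hk hak
    have hL1 : 1 ≤ runLen a k := by
      obtain ⟨m, rfl⟩ : ∃ m, k = m + 1 := ⟨k - 1, by omega⟩
      show 1 ≤ (if a (m+1) = 1 then runLen a m + 1 else 0)
      rw [if_pos hak]
      omega
    exact hb2 k (runLen a k) hk hL1 (runLen_le a k) (runLen_ones a k) (runLen_end a k)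
  -- main induction with strengthened invariant
  have main : ∀ m, 1 ≤ m →
      (∏ k ∈ Finset.Icc 1 m, b k) ≤ (q m : ℝ) ∧
      (∏ k ∈ Finset.Icc 1 m, b k) * (F (runLen a m + 1) : ℝ)
        ≤ ((q m : ℝ) + (q (m-1) : ℝ)) * (F (runLen a m) : ℝ) ∧
      (q m : ℝ) ≤ ∏ k ∈ Finset.Icc 1 m, ((a k : ℝ) + 1) := by
    intro m hm
    induction m, hm using Nat.le_induction with
    | base =>
      rw [show Finset.Icc 1 1 = {1} by rfl, Finset.prod_singleton, Finset.prod_singleton]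
      have hF2 : F 2 = 2 := by have h := hF 0; norm_num at h; omega
      by_cases h1 : a 1 = 1
      · have hb := hbval 1 le_rfl h1
        have hL : runLen a 1 = 1 := by
          show (if a 1 = 1 then runLen a 0 + 1 else 0) = 1
          rw [if_pos h1]; simp [runLen]
        have hbv : b 1 = 1 := by
          rw [hb, hL]
          norm_num [hF0, hF1]
        refine ⟨?_, ?_, ?_⟩
        · rw [hbv, hq1, h1]; norm_num
        · rw [hbv, hL]; norm_num [hq0, hq1, h1, hF1, hF2]
        · rw [hq1]; linarith
      · have hb := hb1 1 le_rfl h1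
        have hL : runLen a 1 = 0 := by
          show (if a 1 = 1 then runLen a 0 + 1 else 0) = 0
          rw [if_neg h1]
        refine ⟨?_, ?_, ?_⟩
        · rw [hb, hq1]
        · rw [hb, hL]; norm_num [hq0, hq1, hF0, hF1]
        · rw [hq1]; linarith
    | succ m hm ih =>
      obtain ⟨ih1, ih2, ih3⟩ := ih
      have hprodb : (∏ k ∈ Finset.Icc 1 (m+1), b k)
          = (∏ k ∈ Finset.Icc 1 m, b k) * b (m+1) :=
        Finset.prod_Icc_succ_top (by omega) b
      have hproda : (∏ k ∈ Finset.Icc 1 (m+1), ((a k : ℝ) + 1))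
          = (∏ k ∈ Finset.Icc 1 m, ((a k : ℝ) + 1)) * ((a (m+1) : ℝ) + 1) :=
        Finset.prod_Icc_succ_top (by omega) _
      have hqrec := hq m hm
      have hms : m + 1 - 1 = m := by omega
      have hqm1 : (q (m-1) : ℝ) ≤ (q m : ℝ) := by exact_mod_cast (hqmono m hm).1
      have hqm2 : (1:ℝ) ≤ (q m : ℝ) := by exact_mod_cast (hqmono m hm).2
      have ham1 : (1:ℝ) ≤ (a (m+1) : ℝ) := by exact_mod_cast ha (m+1) (by omega)
      have hqnn : (0:ℝ) ≤ (q m : ℝ) := by positivity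
      have hqcast : (q (m+1) : ℝ) = (a (m+1) : ℝ) * (q m : ℝ) + (q (m-1) : ℝ) := by
        rw [hqrec]; push_cast; ring
      -- upper bound
      have hupper : (q (m+1) : ℝ) ≤ ∏ k ∈ Finset.Icc 1 (m+1), ((a k : ℝ) + 1) := by
        rw [hproda, hqcast]
        nlinarith [ih3]
      rw [hms]
      by_cases h1 : a (m+1) = 1
      · -- a run of ones continues
        have hL : runLen a (m+1) = runLen a m + 1 := by
          show (if a (m+1) = 1 then runLen a m + 1 else 0) = runLen a m + 1
          rw [if_pos h1]
        have hb := hbval (m+1) (by omega) h1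
        rw [hL] at hb
        simp only [Nat.add_sub_cancel] at hb
        set ℓ := runLen a m with hℓ
        set A : ℝ := ((F ℓ : ℕ) : ℝ) with hA
        set B : ℝ := ((F (ℓ+1) : ℕ) : ℝ) with hB
        have hApos : (1:ℝ) ≤ A := by rw [hA]; exact_mod_cast hFpos ℓ
        have hBpos : (1:ℝ) ≤ B := by rw [hB]; exact_mod_cast hFpos (ℓ+1)
        have hFrec : ((F (ℓ+1+1) : ℕ) : ℝ) = B + A := by
          rw [show ℓ+1+1 = ℓ+2 from rfl, hF ℓ, hB, hA]; push_cast; ring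
        set x : ℝ := ∏ k ∈ Finset.Icc 1 m, b k with hx
        have hAne : A ≠ 0 := by positivity
        have hyA : (x * (B / A)) * A = x * B := by
          rw [mul_assoc, div_mul_cancel₀ _ hAne]
        have hq1v : (q (m+1) : ℝ) = (q m : ℝ) + (q (m-1) : ℝ) := by
          rw [hqcast, h1]; push_cast; ring
        have hx1 : x * (B / A) ≤ (q m : ℝ) + (q (m-1) : ℝ) := by
          nlinarith [ih2, hyA, hApos]
        refine ⟨?_, ?_, hupper⟩
        · rw [hprodb, hb, hq1v]
          exact hx1
        · rw [hprodb, hb, hL, hFrec, hq1v]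
          have expand : (x * (B / A)) * (B + A) = (x * (B / A)) * B + x * B := by
            rw [mul_add, hyA]
          rw [expand]
          have hBnn : (0:ℝ) ≤ B := by linarith
          have t1 : (x * (B / A)) * B ≤ ((q m : ℝ) + (q (m-1) : ℝ)) * B :=
            mul_le_mul_of_nonneg_right hx1 hBnn
          have t2 : x * B ≤ (q m : ℝ) * B :=
            mul_le_mul_of_nonneg_right ih1 hBnn
          linarith [t1, t2]
      · -- a (m+1) ≠ 1
        have hb := hb1 (m+1) (by omega) h1
        have hL : runLen a (m+1) = 0 := by
          show (if a (m+1) = 1 then runLen a m + 1 else 0) = 0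
          rw [if_neg h1]
        have hfirst : (∏ k ∈ Finset.Icc 1 (m+1), b k) ≤ (q (m+1) : ℝ) := by
          rw [hprodb, hb, hqcast]
          have hq0' : (0:ℝ) ≤ (q (m-1) : ℝ) := by positivity
          nlinarith [ih1]
        refine ⟨hfirst, ?_, hupper⟩
        rw [hL]
        norm_num [hF0, hF1]
        nlinarith [hfirst, hqnn]
  exact ⟨(main n hn).1, (main n hn).2.2⟩
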